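/- Decomposition of BSGF queries into semi-joins and a Boolean combination is correct: for a basic query Z := SELECT w̄ FROM R(t̄) WHERE C with conditional atoms κ_1,...,κ_n, if X_i = SELECT w̄ FROM R(t̄) WHERE κ_i for each i, and φ_C is C with each κ_i replaced by X_i, then Z equals {π_{t̄;w̄}(f) : f ∈ DB, f ⊨ R(t̄), φ_C true at π_{t̄;w̄}(f) under membership in the X_i} — provided w̄ contains all variables of t̄ that occur in any κ_i. -/
import Mathlib


/-- A tuple of data values conforms to a vector of terms (terms are data
values `Sum.inl d` or variables `Sum.inr x`). -/
def Conforms {D V : Type*} {n : ℕ} (a : Fin n → D) (t : Fin n → D ⊕ V) : Prop :=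
  (∀ i j, t i = t j → a i = a j) ∧ (∀ i (d : D), t i = Sum.inl d → d = a i)

/-- Boolean formulas over `n` propositional variables (the conditional atoms). -/
inductive BForm (n : ℕ) : Type
  | var : Fin n → BForm n
  | and : BForm n → BForm n → BForm n
  | or : BForm n → BForm n → BForm n
  | not : BForm n → BForm n

/-- Evaluation of a Boolean formula under a valuation. -/
def BForm.eval {n : ℕ} : BForm n → (Fin n → Prop) → Prop
  | .var i, v => v i
  | .and f g, v => f.eval v ∧ g.eval v
  | .or f g, v => f.eval v ∨ g.eval v
  | .not f, v => ¬ f.eval v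


theorem BForm.eval_congr {n : ℕ} (φ : BForm n) {v v' : Fin n → Prop}
    (h : ∀ i, v i ↔ v' i) : φ.eval v ↔ φ.eval v' := by
  induction φ with
  | var i => exact h i
  | and f g hf hg => exact and_congr hf hg
  | or f g hf hg => exact or_congr hf hg
  | not f hf => exact not_congr hf

/-- Correctness of the decomposition of a BSGF query
`Z := SELECT w̄ FROM R(t̄) WHERE C` into semi-joins and a Boolean
combination.  Here `t` is the guard term vector, `Rfacts` its facts; `κ i`
are the conditional atoms with fact sets `Tfacts i`; `C` is the Boolean
combination `φ` of the atoms; `w` are the output variables, at positions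
`posw` of the guard.  `κHolds i f` expresses that atom `κ_i` is true for
guard fact `f` (some `κ_i`-fact agrees with `f` on shared variables), and
`X i` is the semi-join `SELECT w̄ FROM R(t̄) WHERE κ_i`.  Provided `w̄`
contains every variable of `t̄` occurring in some `κ_i`, the query result
equals the guard tuples on which `φ_C` holds with the atoms replaced by
membership in the `X_i`. -/
theorem bsgf_decomposition_correct {D V : Type*} {m q n : ℕ}
    (t : Fin m → D ⊕ V) (Rfacts : Set (Fin m → D))
    (p : Fin n → ℕ) (κ : (i : Fin n) → Fin (p i) → D ⊕ V)
    (Tfacts : (i : Fin n) → Set (Fin (p i) → D))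
    (φ : BForm n)
    (w : Fin q → V) (posw : Fin q → Fin m)
    (hw : ∀ j, t (posw j) = Sum.inr (w j))
    -- w̄ contains all variables of t̄ occurring in any κ_i
    (hcover : ∀ x : V, (∃ i, t i = Sum.inr x) →
      (∃ (i : Fin n) (b : Fin (p i)), κ i b = Sum.inr x) →
      ∃ l, w l = x)
    -- truth of conditional atom κ_i at a guard fact f
    (κHolds : Fin n → (Fin m → D) → Prop)
    (hκ : ∀ i f, κHolds i f ↔
      ∃ g ∈ Tfacts i, Conforms g (κ i) ∧
        ∀ (a : Fin m) (b : Fin (p i)) (x : V),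
          t a = Sum.inr x → κ i b = Sum.inr x → f a = g b)
    -- the semi-join results X_i, projected onto w̄
    (X : Fin n → Set (Fin q → D))
    (hX : ∀ i, X i = {a | ∃ f ∈ Rfacts, Conforms f t ∧
      (∀ j, f (posw j) = a j) ∧ κHolds i f}) :
    -- query semantics = evaluation via the X_i
    {a : Fin q → D | ∃ f ∈ Rfacts, Conforms f t ∧ (∀ j, f (posw j) = a j) ∧
        φ.eval (fun i => κHolds i f)} =
    {a : Fin q → D | ∃ f ∈ Rfacts, Conforms f t ∧ (∀ j, f (posw j) = a j) ∧
        φ.eval (fun i => a ∈ X i)} := by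
  have key : ∀ (f : Fin m → D) (a : Fin q → D), f ∈ Rfacts → Conforms f t →
      (∀ j, f (posw j) = a j) → ∀ i, κHolds i f ↔ a ∈ X i := by
    intro f a hfR hfc hfa i
    constructor
    · intro h
      rw [hX i]
      exact ⟨f, hfR, hfc, hfa, h⟩
    · intro h
      rw [hX i] at h
      obtain ⟨f', hf'R, hf'c, hf'a, hκ'⟩ := h
      rw [hκ] at hκ' ⊢
      obtain ⟨g, hg, hgc, hagree⟩ := hκ'
      refine ⟨g, hg, hgc, ?_⟩
      intro c b x htc hκb
      obtain ⟨l, hl⟩ := hcover x ⟨c, htc⟩ ⟨i, b, hκb⟩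
      have h1 : f c = a l := by
        rw [← hfa l]; exact hfc.1 c (posw l) (by rw [htc, hw l, hl])
      have h2 : f' (posw l) = g b := by
        apply hagree; rw [hw l, hl]; exact hκb
      rw [h1, ← hf'a l, h2]
  ext a
  simp only [Set.mem_setOf_eq]
  constructor
  · rintro ⟨f, hfR, hfc, hfa, hev⟩
    exact ⟨f, hfR, hfc, hfa, (BForm.eval_congr φ (key f a hfR hfc hfa)).mp hev⟩
  · rintro ⟨f, hfR, hfc, hfa, hev⟩
    exact ⟨f, hfR, hfc, hfa, (BForm.eval_congr φ (key f a hfR hfc hfa)).mpr hev⟩
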